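/- Fix N ≥ 2 and β ∈ ℝ, take β′ = β, let ρ^β := ρ_β⊗…⊗ρ_β (N factors), and let L_d(A) := L(A) − i[H_S,A] be the dissipative part of the two-bath Lindblad generator, i.e. L_d(A) = 2β₀(2σ₋^{(1)}Aσ₊^{(1)} − {n₋^{(1)},A}) + 2β₁(2σ₊^{(1)}Aσ₋^{(1)} − {n₊^{(1)},A}) + 2β₀(2σ₋^{(N)}Aσ₊^{(N)} − {n₋^{(N)},A}) + 2β₁(2σ₊^{(N)}Aσ₋^{(N)} − {n₊^{(N)},A}). Then the quantum detailed balance condition holds with respect to ρ^β: (i) H_S·ρ^β = ρ^β·H_S, and (ii) for all 2^N×2^N matrices A, B: Tr( ρ^β · (L_d(A))* · B ) = Tr( ρ^β · A* · L_d(B) ). -/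
import Mathlib


open Matrix Complex Filter
open scoped Kronecker Topology ComplexOrder

noncomputable section

/-- The `N`-spin configuration space index: `(ℂ²)^{⊗N}` is identified with
functions `Fin N → Fin 2 → ℂ`, so `2^N × 2^N` matrices are indexed by `Fin N → Fin 2`. -/
abbrev Spin (N : ℕ) := Fin N → Fin 2

def sx : Matrix (Fin 2) (Fin 2) ℂ := !![0, 1; 1, 0]
def sy : Matrix (Fin 2) (Fin 2) ℂ := !![0, -Complex.I; Complex.I, 0]
def sz : Matrix (Fin 2) (Fin 2) ℂ := !![1, 0; 0, -1]
def sp : Matrix (Fin 2) (Fin 2) ℂ := !![0, 1; 0, 0]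
def sm : Matrix (Fin 2) (Fin 2) ℂ := !![0, 0; 1, 0]
def np : Matrix (Fin 2) (Fin 2) ℂ := !![1, 0; 0, 0]
def nm : Matrix (Fin 2) (Fin 2) ℂ := !![0, 0; 0, 1]

/-- `M^{(k)} = I ⊗ ... ⊗ M ⊗ ... ⊗ I`: the 2×2 matrix `M` acting at site `k`
of the chain, under the iterated Kronecker identification. -/
def site {N : ℕ} (k : Fin N) (M : Matrix (Fin 2) (Fin 2) ℂ) :
    Matrix (Spin N) (Spin N) ℂ :=
  Matrix.of fun x y => ∏ j : Fin N, if j = k then M (x j) (y j) else if x j = y j then 1 else 0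

/-- The XY spin-chain Hamiltonian
`H_S = Σ_{k=1}^N σz^{(k)} + Σ_{k=1}^{N-1} (σx^{(k)}σx^{(k+1)} + σy^{(k)}σy^{(k+1)})`. -/
def HS (N : ℕ) : Matrix (Spin N) (Spin N) ℂ :=
  (∑ k : Fin N, site k sz) +
    ∑ k : Fin N, ∑ l : Fin N,
      if (l : ℕ) = (k : ℕ) + 1 then site k sx * site l sx + site k sy * site l sy else 0

/-- `β₀ = e^{-β}/(e^{-β}+e^{β})`. -/
def b0 (β : ℝ) : ℝ := Real.exp (-β) / (Real.exp (-β) + Real.exp β)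

/-- `β₁ = e^{β}/(e^{-β}+e^{β})`. -/
def b1 (β : ℝ) : ℝ := Real.exp β / (Real.exp (-β) + Real.exp β)

/-- The single-spin Gibbs state `ρ_β = diag(β₀, β₁)`. -/
def rhoB (β : ℝ) : Matrix (Fin 2) (Fin 2) ℂ := !![(b0 β : ℂ), 0; 0, (b1 β : ℂ)]

/-- Heisenberg-picture dissipator at site `k`, inverse temperature `β`:
`2β₀(2σ₋^{(k)}Xσ₊^{(k)} − {n₋^{(k)},X}) + 2β₁(2σ₊^{(k)}Xσ₋^{(k)} − {n₊^{(k)},X})`. -/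
def dissAt {N : ℕ} (k : Fin N) (β : ℝ) (X : Matrix (Spin N) (Spin N) ℂ) :
    Matrix (Spin N) (Spin N) ℂ :=
  (2 * b0 β : ℂ) • (2 • (site k sm * X * site k sp) - (site k nm * X + X * site k nm)) +
    (2 * b1 β : ℂ) • (2 • (site k sp * X * site k sm) - (site k np * X + X * site k np))

/-- Schrödinger-picture (adjoint) dissipator at site `k`:
`2β₀(2σ₊^{(k)}ρσ₋^{(k)} − {n₋^{(k)},ρ}) + 2β₁(2σ₋^{(k)}ρσ₊^{(k)} − {n₊^{(k)},ρ})`. -/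
def dissStarAt {N : ℕ} (k : Fin N) (β : ℝ) (ρ : Matrix (Spin N) (Spin N) ℂ) :
    Matrix (Spin N) (Spin N) ℂ :=
  (2 * b0 β : ℂ) • (2 • (site k sp * ρ * site k sm) - (site k nm * ρ + ρ * site k nm)) +
    (2 * b1 β : ℂ) • (2 • (site k sm * ρ * site k sp) - (site k np * ρ + ρ * site k np))

/-- The two-bath Lindblad generator (Heisenberg picture), baths at sites `k` and `l`. -/
def Ltwo {N : ℕ} (k l : Fin N) (β β' : ℝ) (X : Matrix (Spin N) (Spin N) ℂ) :
    Matrix (Spin N) (Spin N) ℂ :=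
  Complex.I • (HS N * X - X * HS N) + dissAt k β X + dissAt l β' X

/-- The two-bath adjoint Lindblad generator, baths at sites `k` and `l`. -/
def LtwoStar {N : ℕ} (k l : Fin N) (β β' : ℝ) (ρ : Matrix (Spin N) (Spin N) ℂ) :
    Matrix (Spin N) (Spin N) ℂ :=
  (-Complex.I) • (HS N * ρ - ρ * HS N) + dissStarAt k β ρ + dissStarAt l β' ρ

/-- The `N`-fold Kronecker product `ρ_β ⊗ ... ⊗ ρ_β` under the iterated-Kronecker
identification. -/
def prodState (N : ℕ) (β : ℝ) : Matrix (Spin N) (Spin N) ℂ :=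
  Matrix.of fun x y => ∏ j : Fin N, rhoB β (x j) (y j)

/-- A density matrix: Hermitian positive semidefinite with trace 1. -/
def IsDensityMatrix {n : Type*} [Fintype n] [DecidableEq n] (ρ : Matrix n n ℂ) : Prop :=
  ρ.IsHermitian ∧ ρ.PosSemidef ∧ ρ.trace = 1

-- tensor matrix
def T {N : ℕ} (f : Fin N → Matrix (Fin 2) (Fin 2) ℂ) : Matrix (Spin N) (Spin N) ℂ :=
  Matrix.of fun x y => ∏ j : Fin N, f j (x j) (y j)

lemma T_apply {N : ℕ} (f : Fin N → Matrix (Fin 2) (Fin 2) ℂ) (x y : Spin N) :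
    T f x y = ∏ j : Fin N, f j (x j) (y j) := rfl

lemma T_mul {N : ℕ} (f g : Fin N → Matrix (Fin 2) (Fin 2) ℂ) :
    T f * T g = T (fun j => f j * g j) := by
  ext x y
  show (∑ z : Spin N, (∏ j, f j (x j) (z j)) * ∏ j, g j (z j) (y j)) = _
  rw [show (T (fun j => f j * g j)) x y = ∏ j, ∑ b, f j (x j) b * g j b (y j) from rfl]
  rw [Finset.prod_univ_sum, Fintype.piFinset_univ]
  exact Finset.sum_congr rfl fun z _ => (Finset.prod_mul_distrib).symm

lemma site_eq_T {N : ℕ} (k : Fin N) (M : Matrix (Fin 2) (Fin 2) ℂ) :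
    site k M = T (fun j => if j = k then M else 1) := by
  ext x y
  show (∏ j, if j = k then M (x j) (y j) else if x j = y j then 1 else 0)
    = ∏ j, (if j = k then M else 1) (x j) (y j)
  refine Finset.prod_congr rfl fun j _ => ?_
  split_ifs <;> simp_all [Matrix.one_apply]

lemma prodState_eq_T (N : ℕ) (β : ℝ) : prodState N β = T (fun _ => rhoB β) := rfl

lemma T_ite_smul {N : ℕ} (k : Fin N) (c : ℂ) (M : Matrix (Fin 2) (Fin 2) ℂ)
    (g : Fin N → Matrix (Fin 2) (Fin 2) ℂ) :
    T (fun j => if j = k then c • M else g j) = c • T (fun j => if j = k then M else g j) := by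
  ext x y
  show (∏ j, (if j = k then c • M else g j) (x j) (y j))
    = c * ∏ j, (if j = k then M else g j) (x j) (y j)
  rw [Finset.prod_eq_mul_prod_sdiff_singleton_of_mem (Finset.mem_univ k),
      Finset.prod_eq_mul_prod_sdiff_singleton_of_mem (Finset.mem_univ k)]
  have h : ∀ j ∈ Finset.univ \ {k},
      (if j = k then c • M else g j) (x j) (y j) = (if j = k then M else g j) (x j) (y j) := by
    intro j hj
    simp only [Finset.mem_sdiff, Finset.mem_singleton] at hj
    simp [hj.2]
  rw [Finset.prod_congr rfl h]
  simp [Matrix.smul_apply]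
  ring

-- 2x2 facts
lemma rhoB_mul_sp (β : ℝ) : rhoB β * sp = (b0 β : ℂ) • sp := by
  ext i j; fin_cases i <;> fin_cases j <;>
    simp [rhoB, sp, Matrix.mul_apply, Fin.sum_univ_two]

lemma sp_mul_rhoB (β : ℝ) : sp * rhoB β = (b1 β : ℂ) • sp := by
  ext i j; fin_cases i <;> fin_cases j <;>
    simp [rhoB, sp, Matrix.mul_apply, Fin.sum_univ_two]

lemma rhoB_mul_sm (β : ℝ) : rhoB β * sm = (b1 β : ℂ) • sm := by
  ext i j; fin_cases i <;> fin_cases j <;>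
    simp [rhoB, sm, Matrix.mul_apply, Fin.sum_univ_two]

lemma sm_mul_rhoB (β : ℝ) : sm * rhoB β = (b0 β : ℂ) • sm := by
  ext i j; fin_cases i <;> fin_cases j <;>
    simp [rhoB, sm, Matrix.mul_apply, Fin.sum_univ_two]

lemma rhoB_comm_nm (β : ℝ) : rhoB β * nm = nm * rhoB β := by
  ext i j; fin_cases i <;> fin_cases j <;>
    simp [rhoB, nm, Matrix.mul_apply, Fin.sum_univ_two]

lemma rhoB_comm_np (β : ℝ) : rhoB β * np = np * rhoB β := by
  ext i j; fin_cases i <;> fin_cases j <;>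
    simp [rhoB, np, Matrix.mul_apply, Fin.sum_univ_two]

lemma rhoB_comm_sz (β : ℝ) : rhoB β * sz = sz * rhoB β := by
  ext i j; fin_cases i <;> fin_cases j <;>
    simp [rhoB, sz, Matrix.mul_apply, Fin.sum_univ_two]

-- commutation of the product state with commuting site operators
lemma prod_comm_site {N : ℕ} (β : ℝ) (k : Fin N) (M : Matrix (Fin 2) (Fin 2) ℂ)
    (h : rhoB β * M = M * rhoB β) :
    prodState N β * site k M = site k M * prodState N β := by
  rw [prodState_eq_T, site_eq_T, T_mul, T_mul]
  have hf : (fun j => rhoB β * if j = k then M else 1)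
      = (fun j => (if j = k then M else 1) * rhoB β) := by
    funext j; split_ifs with hj
    · exact h
    · simp
  rw [hf]

def Sm {N : ℕ} (β : ℝ) (k : Fin N) : Matrix (Spin N) (Spin N) ℂ :=
  T (fun j => if j = k then sm else rhoB β)
def Sp {N : ℕ} (β : ℝ) (k : Fin N) : Matrix (Spin N) (Spin N) ℂ :=
  T (fun j => if j = k then sp else rhoB β)

lemma prod_mul_site_sm {N : ℕ} (β : ℝ) (k : Fin N) :
    prodState N β * site k sm = (b1 β : ℂ) • Sm β k := by
  rw [prodState_eq_T, site_eq_T, T_mul, Sm, ← T_ite_smul]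
  have hf : (fun j => rhoB β * if j = k then sm else 1)
      = (fun j : Fin N => if j = k then (b1 β : ℂ) • sm else rhoB β) := by
    funext j; split_ifs with hj
    · exact rhoB_mul_sm β
    · simp
  rw [hf]

lemma site_sm_mul_prod {N : ℕ} (β : ℝ) (k : Fin N) :
    site k sm * prodState N β = (b0 β : ℂ) • Sm β k := by
  rw [prodState_eq_T, site_eq_T, T_mul, Sm, ← T_ite_smul]
  have hf : (fun j => (if j = k then sm else 1) * rhoB β)
      = (fun j : Fin N => if j = k then (b0 β : ℂ) • sm else rhoB β) := by
    funext j; split_ifs with hj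
    · exact sm_mul_rhoB β
    · simp
  rw [hf]

lemma prod_mul_site_sp {N : ℕ} (β : ℝ) (k : Fin N) :
    prodState N β * site k sp = (b0 β : ℂ) • Sp β k := by
  rw [prodState_eq_T, site_eq_T, T_mul, Sp, ← T_ite_smul]
  have hf : (fun j => rhoB β * if j = k then sp else 1)
      = (fun j : Fin N => if j = k then (b0 β : ℂ) • sp else rhoB β) := by
    funext j; split_ifs with hj
    · exact rhoB_mul_sp β
    · simp
  rw [hf]

lemma site_sp_mul_prod {N : ℕ} (β : ℝ) (k : Fin N) :
    site k sp * prodState N β = (b1 β : ℂ) • Sp β k := by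
  rw [prodState_eq_T, site_eq_T, T_mul, Sp, ← T_ite_smul]
  have hf : (fun j => (if j = k then sp else 1) * rhoB β)
      = (fun j : Fin N => if j = k then (b1 β : ℂ) • sp else rhoB β) := by
    funext j; split_ifs with hj
    · exact sp_mul_rhoB β
    · simp
  rw [hf]

-- trace helpers
lemma trace_rho_sm {N : ℕ} (β : ℝ) (k : Fin N) (Y : Matrix (Spin N) (Spin N) ℂ) :
    (prodState N β * (site k sm * Y)).trace = (b1 β : ℂ) * (Sm β k * Y).trace := by
  rw [← mul_assoc, prod_mul_site_sm, smul_mul_assoc, trace_smul, smul_eq_mul]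

lemma trace_sm_rho {N : ℕ} (β : ℝ) (k : Fin N) (Y : Matrix (Spin N) (Spin N) ℂ) :
    (prodState N β * (Y * site k sm)).trace = (b0 β : ℂ) * (Sm β k * Y).trace := by
  rw [← mul_assoc, trace_mul_comm, ← mul_assoc, site_sm_mul_prod,
      smul_mul_assoc, trace_smul, smul_eq_mul]

lemma trace_rho_sp {N : ℕ} (β : ℝ) (k : Fin N) (Y : Matrix (Spin N) (Spin N) ℂ) :
    (prodState N β * (site k sp * Y)).trace = (b0 β : ℂ) * (Sp β k * Y).trace := by
  rw [← mul_assoc, prod_mul_site_sp, smul_mul_assoc, trace_smul, smul_eq_mul]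

lemma trace_sp_rho {N : ℕ} (β : ℝ) (k : Fin N) (Y : Matrix (Spin N) (Spin N) ℂ) :
    (prodState N β * (Y * site k sp)).trace = (b1 β : ℂ) * (Sp β k * Y).trace := by
  rw [← mul_assoc, trace_mul_comm, ← mul_assoc, site_sp_mul_prod,
      smul_mul_assoc, trace_smul, smul_eq_mul]

-- jump trace identities
lemma jump_sm {N : ℕ} (β : ℝ) (k : Fin N) (X B : Matrix (Spin N) (Spin N) ℂ) :
    (b0 β : ℂ) * (prodState N β * (site k sm * X * site k sp) * B).trace
      = (b1 β : ℂ) * (prodState N β * X * (site k sp * B * site k sm)).trace := by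
  have e1 : prodState N β * (site k sm * X * site k sp) * B
      = prodState N β * (site k sm * (X * (site k sp * B))) := by
    simp only [mul_assoc]
  have e2 : prodState N β * X * (site k sp * B * site k sm)
      = prodState N β * ((X * (site k sp * B)) * site k sm) := by
    simp only [mul_assoc]
  rw [e1, e2, trace_rho_sm, trace_sm_rho]
  ring

lemma jump_sp {N : ℕ} (β : ℝ) (k : Fin N) (X B : Matrix (Spin N) (Spin N) ℂ) :
    (b1 β : ℂ) * (prodState N β * (site k sp * X * site k sm) * B).trace
      = (b0 β : ℂ) * (prodState N β * X * (site k sm * B * site k sp)).trace := by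
  have e1 : prodState N β * (site k sp * X * site k sm) * B
      = prodState N β * (site k sp * (X * (site k sm * B))) := by
    simp only [mul_assoc]
  have e2 : prodState N β * X * (site k sm * B * site k sp)
      = prodState N β * ((X * (site k sm * B)) * site k sp) := by
    simp only [mul_assoc]
  rw [e1, e2, trace_rho_sp, trace_sp_rho]
  ring

-- anticommutator trace identity
lemma anti_trace {N : ℕ} (β : ℝ) (k : Fin N) (M : Matrix (Fin 2) (Fin 2) ℂ)
    (h : rhoB β * M = M * rhoB β) (X B : Matrix (Spin N) (Spin N) ℂ) :
    (prodState N β * (site k M * X) * B).trace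
      = (prodState N β * X * (B * site k M)).trace := by
  have e1 : prodState N β * (site k M * X) * B
      = (prodState N β * site k M) * (X * B) := by simp only [mul_assoc]
  rw [e1, prod_comm_site β k M h, mul_assoc, trace_mul_comm]
  simp only [mul_assoc]

lemma mid_trace {N : ℕ} (β : ℝ) (k : Fin N) (M : Matrix (Fin 2) (Fin 2) ℂ)
    (X B : Matrix (Spin N) (Spin N) ℂ) :
    (prodState N β * (X * site k M) * B).trace
      = (prodState N β * X * (site k M * B)).trace := by
  simp only [mul_assoc]

-- per-site detailed balance
lemma diss_symm {N : ℕ} (β : ℝ) (k : Fin N) (X B : Matrix (Spin N) (Spin N) ℂ) :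
    (prodState N β * dissAt k β X * B).trace
      = (prodState N β * X * dissAt k β B).trace := by
  simp only [dissAt, ← Nat.cast_smul_eq_nsmul ℂ, Nat.cast_ofNat, smul_sub, smul_add,
    add_mul, mul_add, sub_mul, mul_sub,
    smul_mul_assoc, mul_smul_comm, trace_add, trace_sub, trace_smul, smul_eq_mul,
    smul_smul]
  have h1 := jump_sm β k X B
  have h2 := jump_sp β k X B
  have h3 := anti_trace β k nm (rhoB_comm_nm β) X B
  have h4 := anti_trace β k np (rhoB_comm_np β) X B
  have h5 := mid_trace β k nm X B
  have h6 := mid_trace β k np X B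
  linear_combination (4 : ℂ) * h1 + (4 : ℂ) * h2 - 2 * (b0 β : ℂ) * h3
    - 2 * (b1 β : ℂ) * h4 - 2 * (b0 β : ℂ) * h5 - 2 * (b1 β : ℂ) * h6

-- conjTranspose of site operators
lemma site_conjT {N : ℕ} (k : Fin N) (M : Matrix (Fin 2) (Fin 2) ℂ) :
    (site k M)ᴴ = site k Mᴴ := by
  ext x y
  show star (∏ j, if j = k then M (y j) (x j) else if y j = x j then 1 else 0)
    = ∏ j, if j = k then Mᴴ (x j) (y j) else if x j = y j then 1 else 0
  rw [Complex.star_def, map_prod]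
  refine Finset.prod_congr rfl fun j _ => ?_
  by_cases hj : j = k
  · simp [hj, Matrix.conjTranspose_apply]
  · by_cases hxy : x j = y j <;> simp [hj, hxy, eq_comm]

lemma sm_conjT : smᴴ = sp := by
  ext i j; fin_cases i <;> fin_cases j <;> simp [sm, sp]
lemma sp_conjT : spᴴ = sm := by
  ext i j; fin_cases i <;> fin_cases j <;> simp [sm, sp]
lemma nm_conjT : nmᴴ = nm := by
  ext i j; fin_cases i <;> fin_cases j <;> simp [nm]
lemma np_conjT : npᴴ = np := by
  ext i j; fin_cases i <;> fin_cases j <;> simp [np]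

lemma dissAt_conjT {N : ℕ} (k : Fin N) (β : ℝ) (A : Matrix (Spin N) (Spin N) ℂ) :
    (dissAt k β A)ᴴ = dissAt k β Aᴴ := by
  simp only [dissAt, conjTranspose_add, conjTranspose_sub, conjTranspose_smul,
    conjTranspose_nsmul, conjTranspose_mul, site_conjT, sm_conjT, sp_conjT,
    nm_conjT, np_conjT, Complex.star_def, _root_.map_mul, Complex.conj_ofReal,
    map_ofNat, star_trivial, mul_assoc]
  abel_nf

lemma site_site {N : ℕ} (k l : Fin N) (hkl : k ≠ l) (A B : Matrix (Fin 2) (Fin 2) ℂ) :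
    site k A * site l B = T (fun j => if j = k then A else if j = l then B else 1) := by
  rw [site_eq_T, site_eq_T, T_mul]
  have hf : (fun j => (if j = k then A else 1) * if j = l then B else 1)
      = (fun j : Fin N => if j = k then A else if j = l then B else 1) := by
    funext j
    by_cases hj : j = k
    · simp [hj, hkl]
    · by_cases hj' : j = l <;> simp [hj, hj', Ne.symm hkl]
  rw [hf]

lemma two_site_id (β : ℝ) (a b c d : Fin 2) :
    (rhoB β * sx) a b * ((rhoB β * sx) c d) + (rhoB β * sy) a b * ((rhoB β * sy) c d)
      = (sx * rhoB β) a b * ((sx * rhoB β) c d) + (sy * rhoB β) a b * ((sy * rhoB β) c d) := by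
  fin_cases a <;> fin_cases b <;> fin_cases c <;> fin_cases d <;>
      simp [rhoB, sx, sy, Matrix.mul_apply, Fin.sum_univ_two] <;> ring_nf <;>
      simp [Complex.I_sq] <;> ring

lemma T_pair_add {N : ℕ} (k l : Fin N) (hkl : k ≠ l)
    (A1 B1 A2 B2 C1 D1 C2 D2 : Matrix (Fin 2) (Fin 2) ℂ)
    (g : Fin N → Matrix (Fin 2) (Fin 2) ℂ)
    (h : ∀ a b c d : Fin 2, A1 a b * B1 c d + A2 a b * B2 c d
        = C1 a b * D1 c d + C2 a b * D2 c d) :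
    T (fun j => if j = k then A1 else if j = l then B1 else g j)
      + T (fun j => if j = k then A2 else if j = l then B2 else g j)
    = T (fun j => if j = k then C1 else if j = l then D1 else g j)
      + T (fun j => if j = k then C2 else if j = l then D2 else g j) := by
  ext x y
  have hlk : l ∈ Finset.univ \ ({k} : Finset (Fin N)) := by
    simp [Finset.mem_sdiff, Ne.symm hkl]
  have split : ∀ (F : Fin N → Matrix (Fin 2) (Fin 2) ℂ),
      (∏ j, F j (x j) (y j))
        = F k (x k) (y k) * (F l (x l) (y l) * ∏ j ∈ (Finset.univ \ {k}) \ {l}, F j (x j) (y j)) := by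
    intro F
    rw [Finset.prod_eq_mul_prod_sdiff_singleton_of_mem (Finset.mem_univ k),
        Finset.prod_eq_mul_prod_sdiff_singleton_of_mem hlk]
  have e : ∀ (A B : Matrix (Fin 2) (Fin 2) ℂ),
      (∏ j : Fin N, (if j = k then A else if j = l then B else g j) (x j) (y j))
        = A (x k) (y k) * B (x l) (y l)
            * ∏ j ∈ (Finset.univ \ {k}) \ {l}, g j (x j) (y j) := by
    intro A B
    rw [split]
    have same : (∏ j ∈ (Finset.univ \ {k}) \ {l},
        (if j = k then A else if j = l then B else g j) (x j) (y j))
          = ∏ j ∈ (Finset.univ \ {k}) \ {l}, g j (x j) (y j) := by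
      refine Finset.prod_congr rfl fun j hj => ?_
      simp only [Finset.mem_sdiff, Finset.mem_singleton] at hj
      simp [hj.1.2, hj.2]
    rw [same]
    simp [Ne.symm hkl]
    ring
  simp only [Matrix.add_apply, T_apply]
  rw [e, e, e, e]
  linear_combination (∏ j ∈ (Finset.univ \ {k}) \ {l}, g j (x j) (y j))
    * h (x k) (y k) (x l) (y l)

lemma hop_comm {N : ℕ} (β : ℝ) (k l : Fin N) (hkl : k ≠ l) :
    prodState N β * (site k sx * site l sx + site k sy * site l sy)
      = (site k sx * site l sx + site k sy * site l sy) * prodState N β := by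
  rw [mul_add, add_mul, site_site k l hkl sx sx, site_site k l hkl sy sy, prodState_eq_T,
      T_mul, T_mul, T_mul, T_mul]
  have fix : ∀ A : Matrix (Fin 2) (Fin 2) ℂ,
      (fun j => rhoB β * if j = k then A else if j = l then A else 1)
        = (fun j : Fin N => if j = k then rhoB β * A else if j = l then rhoB β * A else rhoB β) := by
    intro A; funext j
    by_cases hj : j = k
    · simp [hj]
    · by_cases hj' : j = l <;> simp [hj, hj']
  have fix' : ∀ A : Matrix (Fin 2) (Fin 2) ℂ,
      (fun j => (if j = k then A else if j = l then A else 1) * rhoB β)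
        = (fun j : Fin N => if j = k then A * rhoB β else if j = l then A * rhoB β else rhoB β) := by
    intro A; funext j
    by_cases hj : j = k
    · simp [hj]
    · by_cases hj' : j = l <;> simp [hj, hj']
  rw [fix sx, fix sy, fix' sx, fix' sy]
  exact T_pair_add k l hkl _ _ _ _ _ _ _ _ _ (two_site_id β)

lemma HS_comm (N : ℕ) (β : ℝ) : HS N * prodState N β = prodState N β * HS N := by
  simp only [HS, add_mul, mul_add, Finset.sum_mul, Finset.mul_sum, ite_mul, mul_ite,
    zero_mul, mul_zero]
  congr 1
  · refine Finset.sum_congr rfl fun k _ => ?_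
    exact (prod_comm_site β k sz (rhoB_comm_sz β)).symm
  · refine Finset.sum_congr rfl fun k _ => Finset.sum_congr rfl fun l _ => ?_
    split_ifs with h
    · have hkl : k ≠ l := by
        intro e; rw [e] at h; omega
      have := (hop_comm β k l hkl).symm
      rw [add_mul, mul_add] at this
      exact this
    · rfl

/-- Quantum detailed balance at equal temperatures: `[H_S, ρ^β] = 0` and the
dissipative part `L_d = dissAt 1 β + dissAt N β` is symmetric for the
scalar product `⟨A,B⟩ = Tr(ρ^β A* B)`. -/
theorem quantum_detailed_balance (N : ℕ) (hN : 2 ≤ N) (β : ℝ) :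
    HS N * prodState N β = prodState N β * HS N ∧
      ∀ A B : Matrix (Spin N) (Spin N) ℂ,
        (prodState N β *
            (dissAt (⟨0, by omega⟩ : Fin N) β A + dissAt (⟨N - 1, by omega⟩ : Fin N) β A)ᴴ *
            B).trace =
          (prodState N β * Aᴴ *
            (dissAt (⟨0, by omega⟩ : Fin N) β B +
              dissAt (⟨N - 1, by omega⟩ : Fin N) β B)).trace := by
  constructor
  · exact HS_comm N β
  · intro A B
    rw [conjTranspose_add, dissAt_conjT, dissAt_conjT]
    simp only [mul_add, add_mul, trace_add]
    rw [diss_symm β _ Aᴴ B, diss_symm β _ Aᴴ B]
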